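/- Let n ≥ 1, 0 < β < n, 1 < p₁ < n/β, 1/p₂ = 1/p₁ − β/n, 0 < q₁ ≤ q₂ < ∞, and let α, λ be reals with 0 < 2λ < α < n(1 − 1/p₂) − β. Assume there is C₀ > 0 with ‖I^β g‖_{L^{p₂}} ≤ C₀ ‖g‖_{L^{p₁}} for every g ∈ L^{p₁}(ℝⁿ). Let (λ_j)_{j∈ℤ} be nonnegative reals, all but finitely many equal to zero, and for each j let a_j : ℝⁿ → ℝ be measurable, supported in B_j = {x : |x| ≤ 2^j}, with ‖a_j‖_{L^{p₁}} ≤ 2^{−jα}; set f = ∑_{j∈ℤ} λ_j a_j. Then there is a constant C, depending only on n, β, p₁, q₁, q₂, α, λ and C₀ (but not on f, (λ_j) or (a_j)), such that sup_{L∈ℤ} 2^{−Lλ} ( ∑_{k ≤ L} 2^{kαq₂} ‖(I^β f)·χ_{F_k}‖_{L^{p₂}}^{q₂} )^{1/q₂} ≤ C · sup_{L∈ℤ} 2^{−Lλ} ( ∑_{j ≤ L} λ_j^{q₁} )^{1/q₁}. -/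

import Mathlib

open MeasureTheory
open scoped ENNReal

/-- The Riesz potential `I^β f (x) = ∫ f(y) ‖x - y‖^(β - n) dy` on `ℝⁿ`. -/
noncomputable def rieszPot (n : ℕ) (β : ℝ) (f : EuclideanSpace ℝ (Fin n) → ℝ)
    (x : EuclideanSpace ℝ (Fin n)) : ℝ :=
  ∫ y, f y * ‖x - y‖ ^ (β - (n : ℝ))

/-- The dyadic annulus `F_k = B_k \ B_{k-1}`, where `B_k` is the closed ball of
radius `2^k` centred at the origin. -/
def annulus (n : ℕ) (k : ℤ) : Set (EuclideanSpace ℝ (Fin n)) :=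
  Metric.closedBall 0 ((2 : ℝ) ^ k) \ Metric.closedBall 0 ((2 : ℝ) ^ (k - 1))

/-! ### Auxiliary dyadic-weight machinery -/

noncomputable def wpow (t : ℝ) : ℝ≥0∞ := ENNReal.ofReal ((2:ℝ) ^ t)

lemma wpow_def (t : ℝ) : ENNReal.ofReal ((2:ℝ) ^ t) = wpow t := rfl

lemma wpow_add (s t : ℝ) : wpow (s + t) = wpow s * wpow t := by
  rw [wpow, wpow, wpow, Real.rpow_add (by norm_num : (0:ℝ) < 2),
    ENNReal.ofReal_mul (Real.rpow_nonneg (by norm_num) s)]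

lemma wpow_ne_top (t : ℝ) : wpow t ≠ ⊤ := ENNReal.ofReal_ne_top

lemma wpow_pos (t : ℝ) : 0 < wpow t := by
  simp [wpow, ENNReal.ofReal_pos, Real.rpow_pos_of_pos (by norm_num : (0:ℝ) < 2)]

lemma wpow_zero : wpow 0 = 1 := by simp [wpow]

lemma wpow_mul_neg (t : ℝ) : wpow t * wpow (-t) = 1 := by
  rw [← wpow_add]; simp [wpow_zero]

lemma wpow_rpow (t s : ℝ) : wpow t ^ s = wpow (t * s) := by
  rw [wpow, ENNReal.ofReal_rpow_of_pos (Real.rpow_pos_of_pos (by norm_num) t),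
    ← Real.rpow_mul (by norm_num : (0:ℝ) ≤ 2)]
  rfl

lemma wpow_lt_one {c : ℝ} (hc : c < 0) : wpow c < 1 := by
  rw [wpow, ← ENNReal.ofReal_one]
  exact ENNReal.ofReal_lt_ofReal_iff_of_nonneg (Real.rpow_nonneg (by norm_num) c) |>.2
    (Real.rpow_lt_one_of_one_lt_of_neg (by norm_num) hc)

noncomputable def gconst (c : ℝ) : ℝ≥0∞ := (1 - wpow (-c))⁻¹

lemma gconst_ne_top {c : ℝ} (hc : 0 < c) : gconst c ≠ ⊤ := by
  rw [gconst, ENNReal.inv_ne_top]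
  simp only [ne_eq, tsub_eq_zero_iff_le, not_le]
  exact wpow_lt_one (neg_neg_iff_pos.2 hc)

/-- geometric sum over `k ≤ L`. -/
lemma tsum_wpow_le (L : ℤ) (c : ℝ) :
    ∑' k : {k : ℤ // k ≤ L}, wpow ((k.1 : ℝ) * c) = wpow ((L : ℝ) * c) * gconst c := by
  calc ∑' k : {k : ℤ // k ≤ L}, wpow ((k.1 : ℝ) * c)
      = ∑' m : ℕ, wpow (((L - m : ℤ) : ℝ) * c) :=
        (Equiv.tsum_eq
          ({ toFun := fun m => (⟨L - m, by omega⟩ : {k : ℤ // k ≤ L})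
             invFun := fun k => (L - k.1).toNat
             left_inv := fun m => by simp
             right_inv := fun k => by ext; simp; omega } : ℕ ≃ {k : ℤ // k ≤ L})
          (fun k => wpow ((k.1 : ℝ) * c))).symm
    _ = ∑' m : ℕ, wpow ((L:ℝ)*c) * wpow (-c) ^ m := by
        apply tsum_congr
        intro m
        rw [← ENNReal.rpow_natCast (wpow (-c)), wpow_rpow, ← wpow_add]
        push_cast
        ring_nf
    _ = wpow ((L : ℝ) * c) * gconst c := by
        rw [ENNReal.tsum_mul_left, ENNReal.tsum_geometric]; rfl

/-- finite sum over `T` with all elements `≤ L`. -/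
lemma sum_wpow_le (L : ℤ) (c : ℝ) (T : Finset ℤ) (hT : ∀ j ∈ T, j ≤ L)
    (g : ℤ → ℝ≥0∞) (hg : ∀ j ∈ T, g j ≤ wpow ((j:ℝ) * c)) :
    ∑ j ∈ T, g j ≤ wpow ((L : ℝ) * c) * gconst c := by
  calc ∑ j ∈ T, g j ≤ ∑ j ∈ T, ({k : ℤ | k ≤ L}.indicator fun j => wpow ((j:ℝ)*c)) j := by
        apply Finset.sum_le_sum
        intro j hj
        rw [Set.indicator_of_mem (show j ∈ {k : ℤ | k ≤ L} from hT j hj)]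
        exact hg j hj
    _ ≤ ∑' j : ℤ, ({k : ℤ | k ≤ L}.indicator fun j => wpow ((j:ℝ)*c)) j :=
        ENNReal.sum_le_tsum _
    _ = ∑' k : {k : ℤ // k ≤ L}, wpow ((k.1 : ℝ) * c) := by
        rw [← tsum_subtype {k : ℤ | k ≤ L} (fun j => wpow ((j:ℝ)*c))]
        rfl
    _ = _ := tsum_wpow_le L c

/-- finite sum over `T` with all elements `≥ K`, decreasing weight. -/
lemma sum_wpow_ge (K : ℤ) (c : ℝ) (T : Finset ℤ) (hT : ∀ j ∈ T, K ≤ j)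
    (g : ℤ → ℝ≥0∞) (hg : ∀ j ∈ T, g j ≤ wpow (-(j:ℝ) * c)) :
    ∑ j ∈ T, g j ≤ wpow (-(K : ℝ) * c) * gconst c := by
  have h := sum_wpow_le (-K) c (T.image Neg.neg)
    (by simp only [Finset.mem_image]; rintro i ⟨j, hj, rfl⟩; simpa using hT j hj)
    (fun i => g (-i)) (by
      simp only [Finset.mem_image]
      rintro i ⟨j, hj, rfl⟩
      simpa using hg j hj)
  rw [Finset.sum_image (by intro x _ y _ h; omega)] at h
  simp only [neg_neg] at h
  simpa using h

lemma ofReal_zpow_rpow (j : ℤ) (s : ℝ) :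
    ENNReal.ofReal (((2:ℝ)^j) ^ s) = wpow ((j:ℝ)*s) := by
  rw [wpow, ← Real.rpow_intCast 2 j, ← Real.rpow_mul (by norm_num)]

lemma ofReal_zpow_pow (j : ℤ) (m : ℕ) :
    ENNReal.ofReal (((2:ℝ)^j) ^ m) = wpow ((j:ℝ)*m) := by
  rw [← Real.rpow_natCast ((2:ℝ)^j) m, ofReal_zpow_rpow]

lemma vol_ball (n : ℕ) (j : ℤ) :
    volume (Metric.closedBall (0:EuclideanSpace ℝ (Fin n)) ((2:ℝ)^j)) =
      wpow ((j:ℝ)*n) * volume (Metric.ball (0:EuclideanSpace ℝ (Fin n)) 1) := by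
  rw [Measure.addHaar_closedBall _ _ (le_of_lt (by positivity)),
    finrank_euclideanSpace_fin, ofReal_zpow_pow]

/-! ### Analytic lemmas -/

lemma rieszPot_sm {n : ℕ} {β : ℝ} {f : EuclideanSpace ℝ (Fin n) → ℝ}
    (hf : Measurable f) : StronglyMeasurable (rieszPot n β f) := by
  apply StronglyMeasurable.integral_prod_right
    (f := fun (x : EuclideanSpace ℝ (Fin n)) (y : EuclideanSpace ℝ (Fin n)) =>
      f y * ‖x - y‖ ^ (β - (n : ℝ)))
  apply Measurable.stronglyMeasurable
  apply Measurable.mul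
  · exact hf.comp measurable_snd
  · have h1 : Measurable fun t : ℝ => t ^ (β - (n:ℝ)) := by measurability
    exact h1.comp ((measurable_fst.sub measurable_snd).norm)

lemma eLpNorm_one_le {n : ℕ} {g : EuclideanSpace ℝ (Fin n) → ℝ} {p : ℝ≥0∞}
    (hg : Measurable g) (hp : 1 ≤ p) {r : ℝ}
    (hsupp : Function.support g ⊆ Metric.closedBall 0 r) :
    eLpNorm g 1 volume ≤ eLpNorm g p volume *
      (volume (Metric.closedBall (0 : EuclideanSpace ℝ (Fin n)) r)) ^ (1 - 1/p.toReal) := by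
  have hind : (Metric.closedBall (0 : EuclideanSpace ℝ (Fin n)) r).indicator g = g :=
    Set.indicator_eq_self.2 hsupp
  have step1 : eLpNorm g 1 volume = eLpNorm g 1 (volume.restrict (Metric.closedBall 0 r)) := by
    conv_lhs => rw [← hind]
    rw [eLpNorm_indicator_eq_eLpNorm_restrict measurableSet_closedBall]
  rw [step1]
  calc eLpNorm g 1 (volume.restrict (Metric.closedBall 0 r))
      ≤ eLpNorm g p (volume.restrict (Metric.closedBall 0 r)) *
        (volume.restrict (Metric.closedBall 0 r)) Set.univ ^ (1/(1:ℝ≥0∞).toReal - 1/p.toReal) :=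
        eLpNorm_le_eLpNorm_mul_rpow_measure_univ hp hg.aestronglyMeasurable
    _ ≤ _ := by
        rw [Measure.restrict_apply_univ]
        simp only [ENNReal.toReal_one, one_div_one]
        exact mul_le_mul' (eLpNorm_mono_measure _ Measure.restrict_le_self) le_rfl

lemma far_bound {n : ℕ} {β : ℝ} (hβ : β - (n:ℝ) < 0)
    (f ffn fnn : EuclideanSpace ℝ (Fin n) → ℝ)
    (hsum : ∀ y, f y = ffn y + fnn y) (hffm : Measurable ffn)
    (hfi : Integrable ffn volume)
    {r : ℝ} (hr : 0 < r) (hsupp : Function.support ffn ⊆ Metric.closedBall 0 r)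
    (x : EuclideanSpace ℝ (Fin n)) (hx : 2 * r ≤ ‖x‖) :
    ‖rieszPot n β f x‖ ≤ r ^ (β - (n:ℝ)) * (∫ y, ‖ffn y‖) + ‖rieszPot n β fnn x‖ := by
  set K : EuclideanSpace ℝ (Fin n) → ℝ := fun y => ‖x - y‖ ^ (β - (n:ℝ)) with hK
  have hKm : Measurable K := by
    have h1 : Measurable fun t : ℝ => t ^ (β - (n:ℝ)) := by measurability
    exact h1.comp ((measurable_const.sub measurable_id).norm)
  have hbnd : ∀ y, ‖ffn y * K y‖ ≤ r ^ (β - (n:ℝ)) * ‖ffn y‖ := by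
    intro y
    by_cases hy : ffn y = 0
    · simp [hy]
    · have hy' : y ∈ Metric.closedBall (0 : EuclideanSpace ℝ (Fin n)) r := hsupp hy
      rw [Metric.mem_closedBall, dist_zero_right] at hy'
      have h1 : r ≤ ‖x - y‖ := by
        have := norm_sub_norm_le x (x - y)
        simp only [sub_sub_cancel] at this
        linarith
      have h2 : K y ≤ r ^ (β - (n:ℝ)) := Real.rpow_le_rpow_of_nonpos hr h1 hβ.le
      have h3 : ‖K y‖ = K y := Real.norm_of_nonneg (Real.rpow_nonneg (norm_nonneg _) _)
      have h4 : ‖K y‖ ≤ r ^ (β - (n:ℝ)) := by rw [h3]; exact h2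
      rw [norm_mul, mul_comm]
      exact mul_le_mul_of_nonneg_right h4 (norm_nonneg _)
  have hIntff : Integrable (fun y => ffn y * K y) volume := by
    apply Integrable.mono' ((hfi.norm).const_mul (r ^ (β - (n:ℝ))))
      ((hffm.mul hKm).aestronglyMeasurable)
    exact Filter.Eventually.of_forall hbnd
  by_cases hI : Integrable (fun y => f y * K y) volume
  · have hIntfn : Integrable (fun y => fnn y * K y) volume := by
      have h := hI.sub hIntff
      have heq : ((fun y => f y * K y) - fun y => ffn y * K y) = fun y => fnn y * K y := by
        funext y; simp only [Pi.sub_apply]; rw [hsum y]; ring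
      rwa [heq] at h
    have hsplit : rieszPot n β f x = (∫ y, ffn y * K y) + ∫ y, fnn y * K y := by
      rw [rieszPot]
      have heq2 : (fun y => f y * ‖x - y‖ ^ (β - (n:ℝ))) = fun y => ffn y * K y + fnn y * K y := by
        funext y; rw [hsum y, hK]; ring
      rw [heq2, integral_add hIntff hIntfn]
    rw [hsplit]
    refine (norm_add_le _ _).trans ?_
    have hfar : ‖∫ y, ffn y * K y‖ ≤ r ^ (β - (n:ℝ)) * ∫ y, ‖ffn y‖ := by
      calc ‖∫ y, ffn y * K y‖ ≤ ∫ y, ‖ffn y * K y‖ := norm_integral_le_integral_norm _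
        _ ≤ ∫ y, r ^ (β - (n:ℝ)) * ‖ffn y‖ :=
            integral_mono hIntff.norm ((hfi.norm).const_mul _) hbnd
        _ = r ^ (β - (n:ℝ)) * ∫ y, ‖ffn y‖ := integral_const_mul _ _
    exact add_le_add hfar le_rfl
  · have h0 : rieszPot n β f x = 0 := integral_undef hI
    rw [h0]
    simp only [norm_zero]
    have h5 : 0 ≤ ∫ y, ‖ffn y‖ := integral_nonneg fun y => norm_nonneg _
    positivity

/-- the Herz–Morrey norm (with exponents `α, q₂, p₂`, Morrey parameter `λ`)
of `I^β f` of a finite atomic combination `f = ∑ λ_j a_j` is controlled by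
`sup_L 2^{-Lλ} (∑_{j ≤ L} λ_j^{q₁})^{1/q₁}`. -/
theorem stmt_6 (n : ℕ) (hn : 1 ≤ n) (β p₁ p₂ q₁ q₂ α lam : ℝ)
    (hβ0 : 0 < β) (hβn : β < n) (hp₁ : 1 < p₁) (hp₁n : p₁ < n / β)
    (hp₂ : 1 / p₂ = 1 / p₁ - β / n) (hq₁ : 0 < q₁) (hq₁₂ : q₁ ≤ q₂)
    (hlam : 0 < lam) (h2lam : 2 * lam < α) (hα : α < n * (1 - 1 / p₂) - β)
    (C₀ : ℝ) (hC₀ : 0 < C₀)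
    (hbound : ∀ g : EuclideanSpace ℝ (Fin n) → ℝ, MemLp g (ENNReal.ofReal p₁) volume →
      eLpNorm (rieszPot n β g) (ENNReal.ofReal p₂) volume ≤
        ENNReal.ofReal C₀ * eLpNorm g (ENNReal.ofReal p₁) volume) :
    ∃ C : ℝ, 0 < C ∧
      ∀ (lamSeq : ℤ → ℝ), (∀ j, 0 ≤ lamSeq j) → (Function.support lamSeq).Finite →
      ∀ a : ℤ → EuclideanSpace ℝ (Fin n) → ℝ,
        (∀ j, Measurable (a j)) →
        (∀ j, Function.support (a j) ⊆ Metric.closedBall 0 ((2 : ℝ) ^ j)) →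
        (∀ j : ℤ, eLpNorm (a j) (ENNReal.ofReal p₁) volume ≤
          ENNReal.ofReal ((2 : ℝ) ^ (-(j : ℝ) * α))) →
      ∀ f : EuclideanSpace ℝ (Fin n) → ℝ, (f = fun x => ∑ᶠ j : ℤ, lamSeq j * a j x) →
        (⨆ L : ℤ, ENNReal.ofReal ((2 : ℝ) ^ (-(L : ℝ) * lam)) *
            (∑' k : {k : ℤ // k ≤ L},
                ENNReal.ofReal ((2 : ℝ) ^ ((k.1 : ℝ) * α * q₂)) *
                  eLpNorm ((annulus n k.1).indicator (rieszPot n β f))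
                      (ENNReal.ofReal p₂) volume ^ q₂) ^ (1 / q₂)) ≤
          ENNReal.ofReal C *
            ⨆ L : ℤ, ENNReal.ofReal ((2 : ℝ) ^ (-(L : ℝ) * lam)) *
              (∑' j : {j : ℤ // j ≤ L},
                  ENNReal.ofReal (lamSeq j.1) ^ q₁) ^ (1 / q₁) := by
  -- basic real-number facts
  have hn0 : (0:ℝ) < n := by
    have : (1:ℝ) ≤ n := by exact_mod_cast hn
    linarith
  have hp₁0 : 0 < p₁ := lt_trans one_pos hp₁
  have hβn' : β/n < 1/p₁ := by
    rw [div_lt_div_iff₀ hn0 hp₁0]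
    have := (lt_div_iff₀ hβ0).mp hp₁n
    linarith
  have h2inv : 0 < 1/p₂ := by
    rw [hp₂]; linarith
  have hp₂0 : 0 < p₂ := one_div_pos.mp h2inv
  have hp₂1 : 1 < p₂ := by
    have h3 : 1/p₂ < 1 := by
      rw [hp₂]
      have h4 : 1/p₁ < 1 := (div_lt_one hp₁0).2 hp₁
      have h5 : 0 < β/n := div_pos hβ0 hn0
      linarith
    exact (div_lt_one hp₂0).1 h3
  have hnp2 : (n:ℝ) * (1/p₂) = n/p₁ - β := by
    rw [hp₂]
    field_simp
  have hq₂0 : 0 < q₂ := lt_of_lt_of_le hq₁ hq₁₂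
  set sc : ℝ := 1 - 1/p₁ with hsc_def
  have hsc : 0 ≤ sc := by
    have h4 : 1/p₁ < 1 := (div_lt_one hp₁0).2 hp₁
    simp only [hsc_def]; linarith
  have e1 : (n:ℝ) * (1/p₁) = n / p₁ := mul_one_div _ _
  have hδ : α < (n:ℝ) * sc := by
    have key : (n:ℝ) * (1 - 1/p₂) - β = n * (1 - 1/p₁) := by
      rw [hp₂]
      field_simp
      ring
    rw [hsc_def]
    linarith [key, hα]
  set c₁ : ℝ := lam + ((n:ℝ)*sc - α) with hc₁
  have hc₁0 : 0 < c₁ := by simp only [hc₁]; linarith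
  have hαlam : 0 < α - lam := by linarith
  have hlamq₂ : 0 < lam * q₂ := mul_pos hlam hq₂0
  have hexp : (β - (n:ℝ)) + c₁ + (n:ℝ)*(1/p₂) = lam - α := by
    rw [hc₁, hsc_def, hnp2]
    ring
  -- ENNReal exponent facts
  have hP₁1 : 1 ≤ ENNReal.ofReal p₁ := by
    rw [← ENNReal.ofReal_one]; exact ENNReal.ofReal_le_ofReal hp₁.le
  have hP₂1 : 1 ≤ ENNReal.ofReal p₂ := by
    rw [← ENNReal.ofReal_one]; exact ENNReal.ofReal_le_ofReal hp₂1.le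
  have hP₂0 : ENNReal.ofReal p₂ ≠ 0 := (ENNReal.ofReal_pos.2 hp₂0).ne'
  have hP₂top : ENNReal.ofReal p₂ ≠ ⊤ := ENNReal.ofReal_ne_top
  have hP₁tr : (ENNReal.ofReal p₁).toReal = p₁ := ENNReal.toReal_ofReal hp₁0.le
  have hP₂tr : (ENNReal.ofReal p₂).toReal = p₂ := ENNReal.toReal_ofReal hp₂0.le
  set V := volume (Metric.ball (0:EuclideanSpace ℝ (Fin n)) 1) with hV
  have hVtop : V ≠ ⊤ := measure_ball_lt_top.ne
  -- constants
  set Kfar := V ^ sc * V ^ (1/p₂) * gconst c₁ * wpow (-2*((β - (n:ℝ)) + c₁)) with hKfar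
  set Knear := ENNReal.ofReal C₀ * gconst (α - lam) * wpow (α - lam) with hKnear
  set K₁ := Kfar + Knear with hK₁
  set Ktot := K₁ * gconst (lam * q₂) ^ (1/q₂) with hKtot
  have hKtop : Ktot ≠ ⊤ := by
    rw [hKtot]
    apply ENNReal.mul_ne_top
    · rw [hK₁]
      apply ENNReal.add_ne_top.2
      constructor
      · rw [hKfar]
        exact ENNReal.mul_ne_top (ENNReal.mul_ne_top (ENNReal.mul_ne_top
          (ENNReal.rpow_ne_top_of_nonneg hsc hVtop)
          (ENNReal.rpow_ne_top_of_nonneg h2inv.le hVtop))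
          (gconst_ne_top hc₁0)) (wpow_ne_top _)
      · rw [hKnear]
        exact ENNReal.mul_ne_top (ENNReal.mul_ne_top ENNReal.ofReal_ne_top
          (gconst_ne_top hαlam)) (wpow_ne_top _)
    · exact ENNReal.rpow_ne_top_of_nonneg (by positivity) (gconst_ne_top hlamq₂)
  refine ⟨Ktot.toReal + 1, by positivity, ?_⟩
  intro lamSeq hlamnn hfin a hameas hasupp habnd f hfeq
  set S := hfin.toFinset with hS
  set M := (⨆ L : ℤ, ENNReal.ofReal ((2:ℝ)^(-(L:ℝ)*lam)) *
      (∑' j : {j : ℤ // j ≤ L}, ENNReal.ofReal (lamSeq j.1) ^ q₁) ^ (1/q₁)) with hM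
  have hKC : Ktot ≤ ENNReal.ofReal (Ktot.toReal + 1) := by
    conv_lhs => rw [← ENNReal.ofReal_toReal hKtop]
    exact ENNReal.ofReal_le_ofReal (by linarith)
  -- the key bound on coefficients
  have lam_le : ∀ j : ℤ, ENNReal.ofReal (lamSeq j) ≤ wpow ((j:ℝ)*lam) * M := by
    intro j
    have h1 : ENNReal.ofReal ((2:ℝ)^(-(j:ℝ)*lam)) *
        (∑' i : {i : ℤ // i ≤ j}, ENNReal.ofReal (lamSeq i.1) ^ q₁) ^ (1/q₁) ≤ M := by
      rw [hM]
      exact le_iSup (fun L : ℤ => ENNReal.ofReal ((2:ℝ)^(-(L:ℝ)*lam)) *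
        (∑' i : {i : ℤ // i ≤ L}, ENNReal.ofReal (lamSeq i.1) ^ q₁) ^ (1/q₁)) j
    have h2 : ENNReal.ofReal (lamSeq j) ≤
        (∑' i : {i : ℤ // i ≤ j}, ENNReal.ofReal (lamSeq i.1) ^ q₁) ^ (1/q₁) := by
      have h3 := ENNReal.le_tsum
        (f := fun i : {i : ℤ // i ≤ j} => ENNReal.ofReal (lamSeq i.1) ^ q₁) ⟨j, le_refl j⟩
      have h4 := ENNReal.rpow_le_rpow h3 (by positivity : (0:ℝ) ≤ 1/q₁)
      rwa [← ENNReal.rpow_mul, mul_one_div, div_self hq₁.ne', ENNReal.rpow_one] at h4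
    calc ENNReal.ofReal (lamSeq j)
        = wpow ((j:ℝ)*lam) * (wpow (-((j:ℝ)*lam)) * ENNReal.ofReal (lamSeq j)) := by
          rw [← mul_assoc, wpow_mul_neg, one_mul]
      _ ≤ wpow ((j:ℝ)*lam) * M := by
          apply mul_le_mul_right
          calc wpow (-((j:ℝ)*lam)) * ENNReal.ofReal (lamSeq j)
              ≤ wpow (-((j:ℝ)*lam)) *
                (∑' i : {i : ℤ // i ≤ j}, ENNReal.ofReal (lamSeq i.1) ^ q₁) ^ (1/q₁) :=
                mul_le_mul_right h2 _
            _ ≤ M := by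
                rw [show -((j:ℝ)*lam) = -(j:ℝ)*lam from by ring, ← wpow_def]
                exact h1
  -- evaluation of f
  have hf_eval : ∀ y, f y = ∑ j ∈ S, lamSeq j * a j y := by
    intro y
    rw [hfeq]
    apply finsum_eq_sum_of_support_subset
    intro j hj
    rw [hS, Set.Finite.coe_toFinset]
    exact fun h0 => hj (by simp [Function.mem_support.1, h0])
  -- atoms
  have haMem : ∀ j, MemLp (a j) (ENNReal.ofReal p₁) volume := fun j =>
    ⟨(hameas j).aestronglyMeasurable, lt_of_le_of_lt (habnd j) ENNReal.ofReal_lt_top⟩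
  have ha1 : ∀ j : ℤ, eLpNorm (a j) 1 volume ≤
      wpow (-(j:ℝ)*α) * (wpow ((j:ℝ)*n) * V) ^ sc := by
    intro j
    refine (eLpNorm_one_le (hameas j) hP₁1 (hasupp j)).trans ?_
    rw [vol_ball n j, hP₁tr, ← hV]
    exact mul_le_mul' (by rw [← wpow_def]; exact habnd j) le_rfl
  have haInt : ∀ j, Integrable (a j) volume := by
    intro j
    rw [← memLp_one_iff_integrable]
    refine ⟨(hameas j).aestronglyMeasurable, lt_of_le_of_lt (ha1 j) ?_⟩
    exact ENNReal.mul_lt_top ENNReal.ofReal_lt_top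
      (ENNReal.rpow_lt_top_of_nonneg hsc (ENNReal.mul_ne_top (wpow_ne_top _) hVtop))
  have hfmeas : Measurable f := by
    have : f = fun y => ∑ j ∈ S, lamSeq j * a j y := funext hf_eval
    rw [this]
    exact Finset.measurable_sum _ (fun j _ => ((hameas j).const_mul _))
  -- the per-annulus estimate
  have hPk : ∀ k : ℤ, eLpNorm ((annulus n k).indicator (rieszPot n β f))
      (ENNReal.ofReal p₂) volume ≤ K₁ * wpow ((k:ℝ)*(lam - α)) * M := by
    intro k
    have hAmeas : MeasurableSet (annulus n k) :=
      measurableSet_closedBall.diff measurableSet_closedBall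
    set Tn := S.filter (fun j => k-1 ≤ j) with hTn
    set Tf := S.filter (fun j => ¬ (k-1 ≤ j)) with hTf
    set fn := fun y => ∑ j ∈ Tn, lamSeq j * a j y with hfn
    set ff := fun y => ∑ j ∈ Tf, lamSeq j * a j y with hff
    have hfsum : ∀ y, f y = ff y + fn y := by
      intro y
      rw [hf_eval y, ← Finset.sum_filter_add_sum_filter_not S (fun j => k-1 ≤ j)
        (fun j => lamSeq j * a j y)]
      simp only [hff, hfn, hTn, hTf]
      ring
    have hffm : Measurable ff :=
      Finset.measurable_sum _ (fun j _ => ((hameas j).const_mul _))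
    have hfnm : Measurable fn :=
      Finset.measurable_sum _ (fun j _ => ((hameas j).const_mul _))
    have hffInt : Integrable ff volume :=
      integrable_finset_sum _ (fun j _ => ((haInt j).const_mul _))
    set r := (2:ℝ)^(k-2:ℤ) with hr_def
    have hr : 0 < r := by positivity
    have hffsupp : Function.support ff ⊆ Metric.closedBall 0 r := by
      intro y hy
      by_contra hmem
      apply hy
      apply Finset.sum_eq_zero
      intro j hj
      have hj2 : j ≤ k - 2 := by
        rw [hTf, Finset.mem_filter] at hj
        omega
      have haj : a j y = 0 := by
        by_contra ha0
        exact hmem (Metric.closedBall_subset_closedBall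
          (zpow_le_zpow_right₀ (by norm_num) hj2) (hasupp j ha0))
      rw [haj, mul_zero]
    have hfnMem : MemLp fn (ENNReal.ofReal p₁) volume := by
      have hfneq : fn = ∑ j ∈ Tn, fun y => lamSeq j * a j y :=
        funext fun y => by rw [hfn, Finset.sum_apply]
      rw [hfneq]
      exact memLp_finsetSum' _ (fun j _ => (haMem j).const_mul _)
    set Dc := r ^ (β - (n:ℝ)) * ∫ y, ‖ff y‖ with hDc
    have hDc0 : 0 ≤ Dc :=
      mul_nonneg (Real.rpow_nonneg hr.le _) (integral_nonneg fun y => norm_nonneg _)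
    have hpt : ∀ x, ‖(annulus n k).indicator (rieszPot n β f) x‖ ≤
        ‖((annulus n k).indicator (fun _ => Dc) +
          (annulus n k).indicator fun z => ‖rieszPot n β fn z‖) x‖ := by
      intro x
      by_cases hx : x ∈ annulus n k
      · rw [Set.indicator_of_mem hx, Pi.add_apply, Set.indicator_of_mem hx,
          Set.indicator_of_mem hx]
        have hxn : 2 * r ≤ ‖x‖ := by
          have hx2 := hx.2
          rw [Metric.mem_closedBall, dist_zero_right, not_le] at hx2
          have he : (2:ℝ)^(k-1:ℤ) = 2 * r := by
            rw [hr_def, show k-1 = 1 + (k-2) by ring, zpow_add₀ (two_ne_zero)]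
            norm_num
          linarith
        have hfb := far_bound (show β - (n:ℝ) < 0 by linarith) f ff fn hfsum hffm hffInt
          hr hffsupp x hxn
        rw [Real.norm_of_nonneg (add_nonneg hDc0 (norm_nonneg _))]
        exact hfb
      · rw [Set.indicator_of_notMem hx]
        simp
    -- near part
    have hfnnorm : eLpNorm fn (ENNReal.ofReal p₁) volume ≤
        M * (wpow (-((k:ℝ)-1)*(α-lam)) * gconst (α-lam)) := by
      have hfneq : fn = ∑ j ∈ Tn, fun y => lamSeq j * a j y :=
        funext fun y => by rw [hfn, Finset.sum_apply]
      calc eLpNorm fn (ENNReal.ofReal p₁) volume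
          ≤ ∑ j ∈ Tn, eLpNorm (fun y => lamSeq j * a j y) (ENNReal.ofReal p₁) volume := by
            rw [hfneq]
            exact eLpNorm_sum_le
              (fun j _ => ((hameas j).const_mul _).aestronglyMeasurable) hP₁1
        _ ≤ ∑ j ∈ Tn, M * wpow (-(j:ℝ)*(α-lam)) := by
            apply Finset.sum_le_sum
            intro j hj
            have hsm : (fun y => lamSeq j * a j y) = lamSeq j • (a j) := rfl
            rw [hsm, eLpNorm_const_smul, Real.enorm_eq_ofReal (hlamnn j)]
            calc ENNReal.ofReal (lamSeq j) * eLpNorm (a j) (ENNReal.ofReal p₁) volume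
                ≤ (wpow ((j:ℝ)*lam) * M) * wpow (-(j:ℝ)*α) := by
                  exact mul_le_mul' (lam_le j) (by rw [← wpow_def]; exact habnd j)
              _ = M * wpow (-(j:ℝ)*(α-lam)) := by
                  rw [show -(j:ℝ)*(α-lam) = (j:ℝ)*lam + -(j:ℝ)*α from by ring, wpow_add]
                  ring
        _ = M * ∑ j ∈ Tn, wpow (-(j:ℝ)*(α-lam)) := by rw [← Finset.mul_sum]
        _ ≤ M * (wpow (-((k-1:ℤ):ℝ)*(α-lam)) * gconst (α-lam)) := by
            apply mul_le_mul_right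
            apply sum_wpow_ge (k-1) (α-lam) Tn
            · intro j hj
              rw [hTn, Finset.mem_filter] at hj
              exact hj.2
            · intro j hj
              exact le_rfl
        _ = M * (wpow (-((k:ℝ)-1)*(α-lam)) * gconst (α-lam)) := by
            norm_num
    have hnearpart : eLpNorm ((annulus n k).indicator fun z => ‖rieszPot n β fn z‖)
        (ENNReal.ofReal p₂) volume ≤ Knear * wpow ((k:ℝ)*(lam-α)) * M := by
      have hnorm : ∀ x, ‖(annulus n k).indicator (fun z => ‖rieszPot n β fn z‖) x‖ =
          ‖(annulus n k).indicator (rieszPot n β fn) x‖ := by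
        intro x
        by_cases hx : x ∈ annulus n k
        · rw [Set.indicator_of_mem hx, Set.indicator_of_mem hx, norm_norm]
        · rw [Set.indicator_of_notMem hx, Set.indicator_of_notMem hx]
      calc eLpNorm ((annulus n k).indicator fun z => ‖rieszPot n β fn z‖)
            (ENNReal.ofReal p₂) volume
          ≤ eLpNorm ((annulus n k).indicator (rieszPot n β fn)) (ENNReal.ofReal p₂) volume :=
            eLpNorm_mono fun x => (hnorm x).le
        _ ≤ eLpNorm (rieszPot n β fn) (ENNReal.ofReal p₂) volume := eLpNorm_indicator_le _
        _ ≤ ENNReal.ofReal C₀ * eLpNorm fn (ENNReal.ofReal p₁) volume := hbound fn hfnMem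
        _ ≤ ENNReal.ofReal C₀ * (M * (wpow (-((k:ℝ)-1)*(α-lam)) * gconst (α-lam))) :=
            mul_le_mul_right hfnnorm _
        _ = Knear * wpow ((k:ℝ)*(lam-α)) * M := by
            rw [show -((k:ℝ)-1)*(α-lam) = (α-lam) + (k:ℝ)*(lam-α) from by ring, wpow_add,
              hKnear]
            ring
    -- far part
    have hvol : volume (annulus n k) ^ (1/p₂) ≤ (wpow ((k:ℝ)*n) * V) ^ (1/p₂) := by
      apply ENNReal.rpow_le_rpow _ h2inv.le
      have hmono : volume (annulus n k) ≤
          volume (Metric.closedBall (0:EuclideanSpace ℝ (Fin n)) ((2:ℝ)^k)) :=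
        measure_mono Set.diff_subset
      rw [vol_ball n k] at hmono
      exact hmono
    have hDbound : ‖Dc‖ₑ ≤
        wpow (((k:ℝ)-2)*(β-(n:ℝ))) * (M * V^sc * (wpow (((k:ℝ)-2)*c₁) * gconst c₁)) := by
      rw [Real.enorm_eq_ofReal hDc0, hDc,
        ENNReal.ofReal_mul (Real.rpow_nonneg hr.le _)]
      apply mul_le_mul'
      · rw [hr_def, ofReal_zpow_rpow]
        apply le_of_eq
        congr 1
        push_cast
        ring
      · have hffl1 : ENNReal.ofReal (∫ y, ‖ff y‖) = eLpNorm ff 1 volume := by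
          rw [eLpNorm_one_eq_lintegral_enorm, ofReal_integral_norm_eq_lintegral_enorm hffInt]
        rw [hffl1]
        have hffeq : ff = ∑ j ∈ Tf, fun y => lamSeq j * a j y :=
          funext fun y => by rw [hff, Finset.sum_apply]
        calc eLpNorm ff 1 volume
            ≤ ∑ j ∈ Tf, eLpNorm (fun y => lamSeq j * a j y) 1 volume := by
              rw [hffeq]
              exact eLpNorm_sum_le
                (fun j _ => ((hameas j).const_mul _).aestronglyMeasurable) le_rfl
          _ ≤ ∑ j ∈ Tf, (M * V^sc) * wpow ((j:ℝ)*c₁) := by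
              apply Finset.sum_le_sum
              intro j hj
              have hsm : (fun y => lamSeq j * a j y) = lamSeq j • (a j) := rfl
              rw [hsm, eLpNorm_const_smul, Real.enorm_eq_ofReal (hlamnn j)]
              calc ENNReal.ofReal (lamSeq j) * eLpNorm (a j) 1 volume
                  ≤ (wpow ((j:ℝ)*lam) * M) * (wpow (-(j:ℝ)*α) * (wpow ((j:ℝ)*n) * V) ^ sc) :=
                    mul_le_mul' (lam_le j) (ha1 j)
                _ = (M * V^sc) * wpow ((j:ℝ)*c₁) := by
                    rw [ENNReal.mul_rpow_of_nonneg _ _ hsc, wpow_rpow,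
                      show (j:ℝ)*c₁ = (j:ℝ)*lam + (-(j:ℝ)*α + (j:ℝ)*n*sc) from by
                        rw [hc₁]; ring,
                      wpow_add, wpow_add]
                    ring
          _ = (M * V^sc) * ∑ j ∈ Tf, wpow ((j:ℝ)*c₁) := by rw [← Finset.mul_sum]
          _ ≤ (M * V^sc) * (wpow (((k-2:ℤ):ℝ)*c₁) * gconst c₁) := by
              apply mul_le_mul_right
              apply sum_wpow_le (k-2) c₁ Tf
              · intro j hj
                rw [hTf, Finset.mem_filter] at hj
                omega
              · intro j hj
                exact le_rfl
          _ = M * V^sc * (wpow (((k:ℝ)-2)*c₁) * gconst c₁) := by norm_num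
    have hfarpart : eLpNorm ((annulus n k).indicator (fun _ => Dc))
        (ENNReal.ofReal p₂) volume ≤ Kfar * wpow ((k:ℝ)*(lam-α)) * M := by
      rw [eLpNorm_indicator_const hAmeas hP₂0 hP₂top, hP₂tr]
      have hw : wpow (((k:ℝ)-2)*(β-(n:ℝ))) * wpow (((k:ℝ)-2)*c₁) *
          wpow (((k:ℝ)*n)*(1/p₂)) = wpow (-2*((β-(n:ℝ)) + c₁)) * wpow ((k:ℝ)*(lam-α)) := by
        rw [← wpow_add, ← wpow_add, ← wpow_add]
        congr 1
        linear_combination (k:ℝ) * hexp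
      calc ‖Dc‖ₑ * volume (annulus n k) ^ (1/p₂)
          ≤ (wpow (((k:ℝ)-2)*(β-(n:ℝ))) *
              (M * V^sc * (wpow (((k:ℝ)-2)*c₁) * gconst c₁))) *
            ((wpow ((k:ℝ)*n) * V) ^ (1/p₂)) := mul_le_mul' hDbound hvol
        _ = (wpow (((k:ℝ)-2)*(β-(n:ℝ))) * wpow (((k:ℝ)-2)*c₁) * wpow (((k:ℝ)*n)*(1/p₂))) *
            (M * V^sc * gconst c₁ * V^(1/p₂)) := by
            rw [ENNReal.mul_rpow_of_nonneg _ _ h2inv.le, wpow_rpow]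
            ring
        _ = (wpow (-2*((β-(n:ℝ)) + c₁)) * wpow ((k:ℝ)*(lam-α))) *
            (M * V^sc * gconst c₁ * V^(1/p₂)) := by rw [hw]
        _ = Kfar * wpow ((k:ℝ)*(lam-α)) * M := by
            rw [hKfar]
            ring
    -- combine
    calc eLpNorm ((annulus n k).indicator (rieszPot n β f)) (ENNReal.ofReal p₂) volume
        ≤ eLpNorm ((annulus n k).indicator (fun _ => Dc) +
            (annulus n k).indicator fun z => ‖rieszPot n β fn z‖)
            (ENNReal.ofReal p₂) volume := eLpNorm_mono hpt
      _ ≤ eLpNorm ((annulus n k).indicator (fun _ => Dc)) (ENNReal.ofReal p₂) volume +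
          eLpNorm ((annulus n k).indicator fun z => ‖rieszPot n β fn z‖)
            (ENNReal.ofReal p₂) volume :=
          eLpNorm_add_le ((stronglyMeasurable_const.indicator hAmeas).aestronglyMeasurable)
            (((rieszPot_sm hfnm).norm.indicator hAmeas).aestronglyMeasurable) hP₂1
      _ ≤ Kfar * wpow ((k:ℝ)*(lam-α)) * M + Knear * wpow ((k:ℝ)*(lam-α)) * M :=
          add_le_add hfarpart hnearpart
      _ = K₁ * wpow ((k:ℝ)*(lam-α)) * M := by rw [hK₁]; ring
  -- assemble over L
  have hperL : ∀ L : ℤ, ENNReal.ofReal ((2:ℝ)^(-(L:ℝ)*lam)) *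
      (∑' k : {k : ℤ // k ≤ L},
        ENNReal.ofReal ((2:ℝ)^((k.1:ℝ)*α*q₂)) *
          eLpNorm ((annulus n k.1).indicator (rieszPot n β f))
            (ENNReal.ofReal p₂) volume ^ q₂) ^ (1/q₂) ≤ Ktot * M := by
    intro L
    have hterm : ∀ k : {k : ℤ // k ≤ L},
        ENNReal.ofReal ((2:ℝ)^((k.1:ℝ)*α*q₂)) *
          eLpNorm ((annulus n k.1).indicator (rieszPot n β f))
            (ENNReal.ofReal p₂) volume ^ q₂ ≤
        (K₁*M)^q₂ * wpow ((k.1:ℝ)*(lam*q₂)) := by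
      intro k
      have he : wpow ((k.1:ℝ)*α*q₂) * wpow (((k.1:ℝ)*(lam-α))*q₂) =
          wpow ((k.1:ℝ)*(lam*q₂)) := by
        rw [← wpow_add]
        congr 1
        ring
      calc ENNReal.ofReal ((2:ℝ)^((k.1:ℝ)*α*q₂)) *
            eLpNorm ((annulus n k.1).indicator (rieszPot n β f))
              (ENNReal.ofReal p₂) volume ^ q₂
          ≤ wpow ((k.1:ℝ)*α*q₂) * (K₁ * wpow ((k.1:ℝ)*(lam-α)) * M) ^ q₂ := by
            rw [← wpow_def]
            exact mul_le_mul_right (ENNReal.rpow_le_rpow (hPk k.1) hq₂0.le) _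
        _ = (K₁*M)^q₂ * wpow ((k.1:ℝ)*(lam*q₂)) := by
            rw [ENNReal.mul_rpow_of_nonneg (K₁ * wpow ((k.1:ℝ)*(lam-α))) M hq₂0.le,
              ENNReal.mul_rpow_of_nonneg K₁ _ hq₂0.le, wpow_rpow,
              ENNReal.mul_rpow_of_nonneg K₁ M hq₂0.le, ← he]
            ring
    calc ENNReal.ofReal ((2:ℝ)^(-(L:ℝ)*lam)) *
        (∑' k : {k : ℤ // k ≤ L},
          ENNReal.ofReal ((2:ℝ)^((k.1:ℝ)*α*q₂)) *
            eLpNorm ((annulus n k.1).indicator (rieszPot n β f))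
              (ENNReal.ofReal p₂) volume ^ q₂) ^ (1/q₂)
        ≤ wpow (-(L:ℝ)*lam) *
          ((K₁*M)^q₂ * (wpow ((L:ℝ)*(lam*q₂)) * gconst (lam*q₂))) ^ (1/q₂) := by
          rw [← wpow_def]
          apply mul_le_mul_right
          apply ENNReal.rpow_le_rpow _ (by positivity)
          calc (∑' k : {k : ℤ // k ≤ L},
                ENNReal.ofReal ((2:ℝ)^((k.1:ℝ)*α*q₂)) *
                  eLpNorm ((annulus n k.1).indicator (rieszPot n β f))
                    (ENNReal.ofReal p₂) volume ^ q₂)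
              ≤ ∑' k : {k : ℤ // k ≤ L}, (K₁*M)^q₂ * wpow ((k.1:ℝ)*(lam*q₂)) :=
                ENNReal.tsum_le_tsum hterm
            _ = (K₁*M)^q₂ * ∑' k : {k : ℤ // k ≤ L}, wpow ((k.1:ℝ)*(lam*q₂)) :=
                ENNReal.tsum_mul_left
            _ = (K₁*M)^q₂ * (wpow ((L:ℝ)*(lam*q₂)) * gconst (lam*q₂)) := by
                rw [tsum_wpow_le L (lam*q₂)]
      _ = Ktot * M := by
          rw [ENNReal.mul_rpow_of_nonneg _ _ (by positivity : (0:ℝ) ≤ 1/q₂),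
            ENNReal.mul_rpow_of_nonneg _ _ (by positivity : (0:ℝ) ≤ 1/q₂),
            wpow_rpow, ← ENNReal.rpow_mul, mul_one_div, div_self hq₂0.ne',
            ENNReal.rpow_one,
            show (L:ℝ)*(lam*q₂)*(1/q₂) = (L:ℝ)*lam from by field_simp,
            show -(L:ℝ)*lam = -((L:ℝ)*lam) from by ring]
          calc wpow (-((L:ℝ)*lam)) * ((K₁*M) * (wpow ((L:ℝ)*lam) * gconst (lam*q₂)^(1/q₂)))
              = (wpow ((L:ℝ)*lam) * wpow (-((L:ℝ)*lam))) *
                (K₁ * gconst (lam*q₂)^(1/q₂) * M) := by ring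
            _ = Ktot * M := by rw [wpow_mul_neg, one_mul, hKtot]
  calc (⨆ L : ℤ, ENNReal.ofReal ((2:ℝ)^(-(L:ℝ)*lam)) *
        (∑' k : {k : ℤ // k ≤ L},
          ENNReal.ofReal ((2:ℝ)^((k.1:ℝ)*α*q₂)) *
            eLpNorm ((annulus n k.1).indicator (rieszPot n β f))
              (ENNReal.ofReal p₂) volume ^ q₂) ^ (1/q₂))
      ≤ Ktot * M := iSup_le hperL
    _ ≤ ENNReal.ofReal (Ktot.toReal + 1) * M := mul_le_mul_left hKC M
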